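/- Let A ∈ ℝ^{m×m} be row and column diagonally dominant with |A_{ii}| ≥ 0.75 and |A_{ii}| ≥ 0.5 + Σ_{j≠i}|A_{ij}|, |A_{ii}| ≥ 0.5 + Σ_{j≠i}|A_{ji}|, and with at most s nonzero entries per row and per column. Let B ∈ ℝ^{m×m} have the same sparsity pattern as A (B_{ij} = 0 whenever A_{ij} = 0) with all entries bounded by ζ ≤ 1/(10s) in absolute value. Let b, y ∈ ℝ^m with ‖y‖_∞ ≤ ζ and ‖b‖_∞ ≤ C₀. Then A and A+B are invertible, and ‖(A+B)⁻¹(b+y) − A⁻¹b‖_∞ ≤ c·s·ζ for a constant c depending only on C₀. -/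
import Mathlib

open scoped BigOperators

/-- Lower bound `δ‖v‖ ≤ ‖M v‖` for row diagonally dominant matrices with gap `δ`. -/
lemma dd_mulVec_lower {m : ℕ} (M : Matrix (Fin m) (Fin m) ℝ) (δ : ℝ) (hδ : 0 ≤ δ)
    (hdd : ∀ i, δ + ∑ j ∈ Finset.univ.erase i, |M i j| ≤ |M i i|) (v : Fin m → ℝ) :
    δ * ‖v‖ ≤ ‖M.mulVec v‖ := by
  rcases isEmpty_or_nonempty (Fin m) with hE | hE
  · have : v = 0 := Subsingleton.elim v 0
    simp [this]
  · obtain ⟨i, -, hi⟩ := Finset.exists_max_image Finset.univ (fun j => |v j|)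
      ⟨Classical.arbitrary _, Finset.mem_univ _⟩
    have hnv : ‖v‖ = |v i| := by
      refine le_antisymm ?_ ?_
      · rw [pi_norm_le_iff_of_nonneg (abs_nonneg _)]
        intro j; rw [Real.norm_eq_abs]; exact hi j (Finset.mem_univ j)
      · rw [← Real.norm_eq_abs]; exact norm_le_pi_norm v i
    have hsum : M.mulVec v i = M i i * v i + ∑ j ∈ Finset.univ.erase i, M i j * v j := by
      rw [Matrix.mulVec, dotProduct, ← Finset.add_sum_erase _ _ (Finset.mem_univ i)]
    have h1 : |∑ j ∈ Finset.univ.erase i, M i j * v j|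
        ≤ (∑ j ∈ Finset.univ.erase i, |M i j|) * |v i| := by
      calc |∑ j ∈ Finset.univ.erase i, M i j * v j|
          ≤ ∑ j ∈ Finset.univ.erase i, |M i j * v j| := Finset.abs_sum_le_sum_abs _ _
        _ ≤ ∑ j ∈ Finset.univ.erase i, |M i j| * |v i| := by
            refine Finset.sum_le_sum fun j _ => ?_
            rw [abs_mul]
            exact mul_le_mul_of_nonneg_left (hi j (Finset.mem_univ j)) (abs_nonneg _)
        _ = (∑ j ∈ Finset.univ.erase i, |M i j|) * |v i| := by rw [Finset.sum_mul]
    have h2 : δ * |v i| ≤ |M.mulVec v i| := by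
      have h3 : |M i i * v i| - |∑ j ∈ Finset.univ.erase i, M i j * v j| ≤ |M.mulVec v i| := by
        rw [hsum]
        have := abs_add_le (M i i * v i + ∑ j ∈ Finset.univ.erase i, M i j * v j)
          (-(∑ j ∈ Finset.univ.erase i, M i j * v j))
        simp only [add_neg_cancel_right, abs_neg] at this
        linarith
      have h4 : δ * |v i| ≤ |M i i * v i| - (∑ j ∈ Finset.univ.erase i, |M i j|) * |v i| := by
        rw [abs_mul]
        have := hdd i
        nlinarith [abs_nonneg (v i)]
      linarith
    calc δ * ‖v‖ = δ * |v i| := by rw [hnv]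
      _ ≤ |M.mulVec v i| := h2
      _ = ‖M.mulVec v i‖ := (Real.norm_eq_abs _).symm
      _ ≤ ‖M.mulVec v‖ := norm_le_pi_norm _ i

lemma dd_isUnit {m : ℕ} (M : Matrix (Fin m) (Fin m) ℝ) (δ : ℝ) (hδ : 0 < δ)
    (hdd : ∀ i, δ + ∑ j ∈ Finset.univ.erase i, |M i j| ≤ |M i i|) : IsUnit M := by
  rw [← Matrix.mulVec_injective_iff_isUnit]
  have : Function.Injective M.mulVecLin := by
    rw [← LinearMap.ker_eq_bot, LinearMap.ker_eq_bot']
    intro v hv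
    have := dd_mulVec_lower M δ hδ.le hdd v
    rw [show M.mulVecLin v = M.mulVec v from rfl] at hv
    rw [hv, norm_zero] at this
    have hv0 : ‖v‖ = 0 := le_antisymm (nonpos_of_mul_nonpos_right (by linarith) hδ) (norm_nonneg v)
    exact norm_eq_zero.mp hv0
  exact this

/-- Upper bound `‖M v‖ ≤ K ‖v‖` when all row ℓ¹-norms are at most `K`. -/
lemma rowsum_mulVec_upper {m : ℕ} (M : Matrix (Fin m) (Fin m) ℝ) (K : ℝ)
    (hK : ∀ i, ∑ j, |M i j| ≤ K) (v : Fin m → ℝ) :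
    ‖M.mulVec v‖ ≤ K * ‖v‖ := by
  rcases isEmpty_or_nonempty (Fin m) with hE | hE
  · have h1 : M.mulVec v = 0 := Subsingleton.elim _ 0
    have h2 : v = 0 := Subsingleton.elim _ 0
    simp [h1, h2]
  · have hK0 : 0 ≤ K := le_trans (Finset.sum_nonneg fun j _ => abs_nonneg _)
      (hK (Classical.arbitrary _))
    rw [pi_norm_le_iff_of_nonneg (mul_nonneg hK0 (norm_nonneg v))]
    intro i
    rw [Real.norm_eq_abs, Matrix.mulVec, dotProduct]
    calc |∑ j, M i j * v j| ≤ ∑ j, |M i j * v j| := Finset.abs_sum_le_sum_abs _ _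
      _ ≤ ∑ j, |M i j| * ‖v‖ := by
          refine Finset.sum_le_sum fun j _ => ?_
          rw [abs_mul]
          exact mul_le_mul_of_nonneg_left
            ((Real.norm_eq_abs (v j)) ▸ norm_le_pi_norm v j) (abs_nonneg _)
      _ = (∑ j, |M i j|) * ‖v‖ := by rw [Finset.sum_mul]
      _ ≤ K * ‖v‖ := mul_le_mul_of_nonneg_right (hK i) (norm_nonneg v)

/-- stability of sparse, row- and column-diagonally dominant linear systems.
There is a constant `c` depending only on `C₀` such that for every row/column diagonally
dominant matrix `A` with at most `s` nonzero entries per row and column, every perturbation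
`B` with the same sparsity pattern and entries bounded by `ζ ≤ 1/(10 s)`, and every
right-hand sides `b, y` with `‖b‖_∞ ≤ C₀` and `‖y‖_∞ ≤ ζ`, both `A` and `A + B` are
invertible and `‖(A+B)⁻¹(b+y) − A⁻¹ b‖_∞ ≤ c·s·ζ`. Here vectors `Fin m → ℝ` carry the
sup-norm. -/
theorem sparse_diag_dominant_stability (C₀ : ℝ) (hC₀ : 0 < C₀) :
    ∃ c : ℝ, 0 < c ∧
      ∀ (m s : ℕ) (ζ : ℝ) (A B : Matrix (Fin m) (Fin m) ℝ) (b y : Fin m → ℝ),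
        (∀ i, (0.75 : ℝ) ≤ |A i i|) →
        (∀ i, (0.5 : ℝ) + ∑ j ∈ Finset.univ.erase i, |A i j| ≤ |A i i|) →
        (∀ i, (0.5 : ℝ) + ∑ j ∈ Finset.univ.erase i, |A j i| ≤ |A i i|) →
        (∀ i, (Finset.univ.filter fun j => A i j ≠ 0).card ≤ s) →
        (∀ j, (Finset.univ.filter fun i => A i j ≠ 0).card ≤ s) →
        (∀ i j, A i j = 0 → B i j = 0) →
        (∀ i j, |B i j| ≤ ζ) →
        0 < ζ → ζ ≤ 1 / (10 * s) →
        ‖y‖ ≤ ζ → ‖b‖ ≤ C₀ →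
        IsUnit A ∧ IsUnit (A + B) ∧
          ‖(A + B)⁻¹.mulVec (b + y) - A⁻¹.mulVec b‖ ≤ c * s * ζ := by
  refine ⟨5 * C₀ + 3, by linarith, ?_⟩
  intro m s ζ A B b y hdiag hrow hcol hrs hcs hpat hBζ hζ0 hζs hy hb
  -- s ≥ 1
  rcases Nat.eq_zero_or_pos s with hs0 | hs0
  · subst hs0; simp at hζs; linarith
  have hs1 : (1 : ℝ) ≤ s := by exact_mod_cast hs0
  have hsζ : (s : ℝ) * ζ ≤ 1 / 10 := by
    have h10 : (0 : ℝ) < 10 * s := by positivity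
    have := (le_div_iff₀ h10).mp hζs
    nlinarith
  have hsζ0 : 0 ≤ (s : ℝ) * ζ := by positivity
  -- row sums of |B|
  have hBrow : ∀ i, ∑ j, |B i j| ≤ (s : ℝ) * ζ := by
    intro i
    have h1 : ∑ j, |B i j| = ∑ j ∈ Finset.univ.filter (fun j => A i j ≠ 0), |B i j| := by
      refine (Finset.sum_subset (Finset.filter_subset _ _) ?_).symm
      intro j _ hj
      simp only [Finset.mem_filter, Finset.mem_univ, true_and, not_not] at hj
      rw [hpat i j hj, abs_zero]
    rw [h1]
    calc ∑ j ∈ Finset.univ.filter (fun j => A i j ≠ 0), |B i j|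
        ≤ ∑ _j ∈ Finset.univ.filter (fun j => A i j ≠ 0), ζ :=
          Finset.sum_le_sum fun j _ => hBζ i j
      _ = (Finset.univ.filter (fun j => A i j ≠ 0)).card * ζ := by
          rw [Finset.sum_const, nsmul_eq_mul]
      _ ≤ (s : ℝ) * ζ := by
          exact mul_le_mul_of_nonneg_right (by exact_mod_cast hrs i) hζ0.le
  -- A's dominance with gap 1/2
  have hddA : ∀ i, (1/2 : ℝ) + ∑ j ∈ Finset.univ.erase i, |A i j| ≤ |A i i| := by
    intro i; rw [show (1/2:ℝ) = 0.5 by norm_num]; exact hrow i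
  have hA : IsUnit A := dd_isUnit A (1/2) (by norm_num) hddA
  -- A+B's dominance with gap 2/5
  have hddAB : ∀ i, (2/5 : ℝ) + ∑ j ∈ Finset.univ.erase i, |(A + B) i j| ≤ |(A + B) i i| := by
    intro i
    have hd : |A i i| - |B i i| ≤ |(A + B) i i| := by
      have := abs_add_le (A i i + B i i) (-(B i i))
      simp only [add_neg_cancel_right, abs_neg] at this
      simpa [Matrix.add_apply] using this
    have hoff : ∑ j ∈ Finset.univ.erase i, |(A + B) i j|
        ≤ ∑ j ∈ Finset.univ.erase i, |A i j| + ∑ j ∈ Finset.univ.erase i, |B i j| := by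
      rw [← Finset.sum_add_distrib]
      exact Finset.sum_le_sum fun j _ => by simpa [Matrix.add_apply] using abs_add_le (A i j) (B i j)
    have hBi : |B i i| + ∑ j ∈ Finset.univ.erase i, |B i j| = ∑ j, |B i j| :=
      Finset.add_sum_erase _ (fun j => |B i j|) (Finset.mem_univ i)
    have hBr := hBrow i
    have := hddA i
    linarith [hsζ]
  have hAB : IsUnit (A + B) := dd_isUnit (A + B) (2/5) (by norm_num) hddAB
  refine ⟨hA, hAB, ?_⟩
  set x := A⁻¹.mulVec b with hx
  set x' := (A + B)⁻¹.mulVec (b + y) with hx'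
  have hAx : A.mulVec x = b := by
    rw [hx, Matrix.mulVec_mulVec, Matrix.mul_nonsing_inv A ((Matrix.isUnit_iff_isUnit_det A).mp hA),
      Matrix.one_mulVec]
  have hABx : (A + B).mulVec x' = b + y := by
    rw [hx', Matrix.mulVec_mulVec,
      Matrix.mul_nonsing_inv _ ((Matrix.isUnit_iff_isUnit_det _).mp hAB), Matrix.one_mulVec]
  -- bound on ‖x'‖
  have hxb : (2/5 : ℝ) * ‖x'‖ ≤ ‖b + y‖ := by
    have := dd_mulVec_lower (A + B) (2/5) (by norm_num) hddAB x'
    rwa [hABx] at this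
  have hby : ‖b + y‖ ≤ C₀ + ζ := le_trans (norm_add_le b y) (by linarith)
  have hx'b : ‖x'‖ ≤ (5/2) * (C₀ + ζ) := by linarith
  -- key identity
  have hkey : A.mulVec (x' - x) = y - B.mulVec x' := by
    have h1 : A.mulVec x' + B.mulVec x' = b + y := by
      rw [← Matrix.add_mulVec]; exact hABx
    have h2 : A.mulVec (x' - x) = A.mulVec x' - A.mulVec x := by
      rw [Matrix.mulVec_sub]
    rw [h2, hAx]
    funext i
    have := congrFun h1 i
    simp only [Pi.add_apply, Pi.sub_apply] at *
    linarith
  have hBx' : ‖B.mulVec x'‖ ≤ (s : ℝ) * ζ * ‖x'‖ := rowsum_mulVec_upper B _ hBrow x'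
  have hlow : (1/2 : ℝ) * ‖x' - x‖ ≤ ‖y - B.mulVec x'‖ := by
    have := dd_mulVec_lower A (1/2) (by norm_num) hddA (x' - x)
    rwa [hkey] at this
  have hrhs : ‖y - B.mulVec x'‖ ≤ ζ + (s : ℝ) * ζ * ‖x'‖ :=
    le_trans (norm_sub_le _ _) (by linarith)
  have hfin : ‖x' - x‖ ≤ 2 * ζ + 2 * ((s : ℝ) * ζ) * ((5/2) * (C₀ + ζ)) := by
    have h5 : (s : ℝ) * ζ * ‖x'‖ ≤ (s : ℝ) * ζ * ((5/2) * (C₀ + ζ)) :=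
      mul_le_mul_of_nonneg_left hx'b hsζ0
    linarith
  have hζs' : ζ ≤ (s : ℝ) * ζ := by nlinarith
  have hζ10 : ζ ≤ 1/10 := by nlinarith
  calc ‖x' - x‖ ≤ 2 * ζ + 2 * ((s : ℝ) * ζ) * ((5/2) * (C₀ + ζ)) := hfin
    _ ≤ (5 * C₀ + 3) * s * ζ := by nlinarith [mul_nonneg hsζ0 hζ0.le]
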